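/- None of the prefixes of Φ = φ^ω(0) of length n with 19 ≤ n ≤ 29 are irreducibly square-free, where φ(0)=01202120102120210, φ(1)=12010201210201021, φ(2)=20121012021012102. -/

import Mathlib

set_option maxRecDepth 4000


/-- A word has a square if some nonempty `u` with `u ++ u` an infix. -/
def HasSquare (w : List (Fin 3)) : Prop :=
  ∃ u : List (Fin 3), u ≠ [] ∧ (u ++ u) <:+: w

def SquareFree (w : List (Fin 3)) : Prop := ¬ HasSquare w

/-- `u` occurs as a factor of the infinite word `x`. -/
def InfFactor (u : List (Fin 3)) (x : ℕ → Fin 3) : Prop :=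
  ∃ m : ℕ, ∀ i < u.length, u.getD i 0 = x (m + i)

def InfSquareFree (x : ℕ → Fin 3) : Prop :=
  ¬ ∃ u : List (Fin 3), u ≠ [] ∧ InfFactor (u ++ u) x

/-- A square-free word is irreducibly square-free if deleting any interior
letter creates a square. -/
def IrrSF (w : List (Fin 3)) : Prop :=
  SquareFree w ∧
    ∀ (w1 w2 : List (Fin 3)) (a : Fin 3),
      w = w1 ++ [a] ++ w2 → w1 ≠ [] → w2 ≠ [] → HasSquare (w1 ++ w2)

/-- The uniform morphism φ of length 17. -/
def phi : Fin 3 → List (Fin 3) := ![[0,1,2,0,2,1,2,0,1,0,2,1,2,0,2,1,0], [1,2,0,1,0,2,0,1,2,1,0,2,0,1,0,2,1], [2,0,1,2,1,0,1,2,0,2,1,0,1,2,1,0,2]]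

def phiW (w : List (Fin 3)) : List (Fin 3) := w.flatMap phi

/-- The infinite fixed point `Φ = φ^ω(0)`. -/
def Phi (n : ℕ) : Fin 3 := ((phiW^[n+1]) [0]).getD n 0

-- ===== auxiliary material =====

lemma phiW_append (u v : List (Fin 3)) : phiW (u ++ v) = phiW u ++ phiW v := by
  simp [phiW]

lemma phiW_mono {u v : List (Fin 3)} (h : u <+: v) : phiW u <+: phiW v := by
  obtain ⟨t, rfl⟩ := h
  exact ⟨phiW t, (phiW_append u t).symm⟩

lemma iterate_prefix_succ (m : ℕ) : (phiW^[m]) [0] <+: (phiW^[m+1]) [0] := by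
  induction m with
  | zero => decide
  | succ k ih =>
      rw [Function.iterate_succ_apply', Function.iterate_succ_apply']
      exact phiW_mono ih

lemma iterate_prefix {a b : ℕ} (h : a ≤ b) : (phiW^[a]) [0] <+: (phiW^[b]) [0] := by
  induction b with
  | zero => simpa [Nat.le_zero.mp h]
  | succ k ih =>
      rcases Nat.lt_or_ge a (k+1) with hk | hk
      · exact (ih (Nat.lt_succ_iff.mp hk)).trans (iterate_prefix_succ k)
      · have : a = k + 1 := le_antisymm h hk
        simp [this]

lemma getD_of_prefix {l1 l2 : List (Fin 3)} (h : l1 <+: l2) {n : ℕ}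
    (hn : n < l1.length) : l1.getD n 0 = l2.getD n 0 := by
  obtain ⟨t, rfl⟩ := h
  rw [List.getD_eq_getElem?_getD, List.getD_eq_getElem?_getD,
    List.getElem?_append_left hn]

lemma length_L2 : ((phiW^[2]) [0]).length = 289 := by decide

lemma Phi_eq_getD (i : ℕ) (hi : i < 289) : Phi i = ((phiW^[2]) [0]).getD i 0 := by
  unfold Phi
  rcases Nat.lt_or_ge i 1 with h | h
  · interval_cases i
    exact getD_of_prefix (iterate_prefix (by norm_num)) (by decide)
  · exact (getD_of_prefix (iterate_prefix (by omega)) (by rw [length_L2]; exact hi)).symm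

lemma ofFn_eq_take (n : ℕ) (hn : n ≤ 289) :
    (List.ofFn fun i : Fin n => Phi i) = ((phiW^[2]) [0]).take n := by
  apply List.ext_getElem
  · rw [List.length_ofFn, List.length_take, length_L2]; omega
  · intro i h1 h2
    have hi : i < n := by simpa using h1
    rw [List.getElem_ofFn, List.getElem_take]
    have : i < 289 := lt_of_lt_of_le hi hn
    rw [Phi_eq_getD i this, List.getD_eq_getElem?_getD, List.getElem?_eq_getElem
      (by rw [length_L2]; exact this)]
    rfl

lemma hasSquare_exists {w : List (Fin 3)} (h : HasSquare w) :
    ∃ k < w.length, ∃ m < w.length, 0 < m ∧ k + m + m ≤ w.length ∧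
      (w.drop k).take m = (w.drop (k + m)).take m := by
  obtain ⟨u, hu, s, t, hst⟩ := h
  have hm : 0 < u.length := List.length_pos_iff.mpr hu
  refine ⟨s.length, ?_, u.length, ?_, hm, ?_, ?_⟩
  · subst hst; simp; omega
  · subst hst; simp; omega
  · subst hst; simp; omega
  · have h1 : w.drop s.length = u ++ u ++ t := by
      subst hst; rw [List.append_assoc, List.drop_left]
    have h2 : w.drop (s.length + u.length) = u ++ t := by
      have : w.drop (s.length + u.length) = (w.drop s.length).drop u.length := by
        rw [List.drop_drop]
      rw [this, h1, List.append_assoc, List.drop_left]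
    rw [h1, h2, List.append_assoc, List.take_left, List.take_left]

lemma not_irrSF_of_witness (w w1 w2 : List (Fin 3)) (a : Fin 3)
    (he : w = w1 ++ [a] ++ w2) (h1 : w1 ≠ []) (h2 : w2 ≠ [])
    (hs : ∀ k < (w1 ++ w2).length, ∀ m < (w1 ++ w2).length,
      ¬ (0 < m ∧ k + m + m ≤ (w1 ++ w2).length ∧
        ((w1 ++ w2).drop k).take m = ((w1 ++ w2).drop (k + m)).take m)) :
    ¬ IrrSF w := by
  rintro ⟨-, h⟩
  obtain ⟨k, hk, m, hm, h3, h4, h5⟩ := hasSquare_exists (h w1 w2 a he h1 h2)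
  exact hs k hk m hm ⟨h3, h4, h5⟩

theorem Phi_prefixes_19_to_29_not_irrSF (n : ℕ) (h1 : 19 ≤ n) (h2 : n ≤ 29) :
    ¬ IrrSF (List.ofFn fun i : Fin n => Phi i) := by
  rw [ofFn_eq_take n (by omega)]
  interval_cases n
  · exact not_irrSF_of_witness _ [0,1,2,0,2,1,2,0,1,0,2,1,2,0,2,1,0] [2] 1
      (by decide) (by decide) (by decide) (by decide)
  · exact not_irrSF_of_witness _ [0,1,2,0,2,1,2,0,1,0,2,1,2,0,2,1,0] [2,0] 1
      (by decide) (by decide) (by decide) (by decide)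
  · exact not_irrSF_of_witness _ [0,1,2,0,2,1,2,0,1,0,2,1,2,0,2,1,0] [2,0,1] 1
      (by decide) (by decide) (by decide) (by decide)
  · exact not_irrSF_of_witness _ [0,1,2,0,2,1,2,0,1,0,2,1,2,0,2,1,0] [2,0,1,0] 1
      (by decide) (by decide) (by decide) (by decide)
  · exact not_irrSF_of_witness _ [0,1,2,0,2,1,2,0,1,0,2,1,2,0,2,1,0] [2,0,1,0,2] 1
      (by decide) (by decide) (by decide) (by decide)
  · exact not_irrSF_of_witness _ [0,1,2,0,2,1,2,0,1,0,2,1,2,0,2,1,0,1,2] [1,0,2,0] 0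
      (by decide) (by decide) (by decide) (by decide)
  · exact not_irrSF_of_witness _ [0,1,2,0,2,1,2,0,1,0,2,1,2,0,2,1,0,1,2] [1,0,2,0,1] 0
      (by decide) (by decide) (by decide) (by decide)
  · exact not_irrSF_of_witness _ [0,1,2,0,2,1,2,0,1,0,2,1,2,0,2,1,0,1,2] [1,0,2,0,1,2] 0
      (by decide) (by decide) (by decide) (by decide)
  · exact not_irrSF_of_witness _ [0,1,2,0,2,1,2,0,1,0,2,1,2,0,2,1,0,1,2] [1,0,2,0,1,2,1] 0
      (by decide) (by decide) (by decide) (by decide)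
  · exact not_irrSF_of_witness _ [0,1,2,0,2,1,2,0,1,0,2,1,2,0,2,1,0,1,2] [1,0,2,0,1,2,1,0] 0
      (by decide) (by decide) (by decide) (by decide)
  · exact not_irrSF_of_witness _ [0,1,2,0,2,1,2,0,1,0,2,1,2,0,2,1,0,1,2,0,1,0,2,0,1,2] [0,2] 1
      (by decide) (by decide) (by decide) (by decide)
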